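/- For all Schwartz functions f, g ∈ 𝒮(ℝ, ℂ), the principal-value limit θ(f, g) = lim_{ε→0⁺} ( ∫_{−∞}^{−ε} + ∫_{ε}^{∞} ) (1 − e^{−p})^{−1} conj(f̂(p)) ĝ(p) dp exists in ℂ. -/

import Mathlib

open MeasureTheory Filter

noncomputable def fourierHat (f : ℝ → ℂ) (p : ℝ) : ℂ :=
  ((Real.sqrt (2 * Real.pi) : ℂ))⁻¹ *
    ∫ x : ℝ, Complex.exp (-Complex.I * (p : ℂ) * (x : ℂ)) * f x

open Real in
lemma fourierHat_eq (f : SchwartzMap ℝ ℂ) (p : ℝ) :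
    fourierHat ⇑f p = (((Real.sqrt (2 * π))⁻¹ : ℝ) : ℂ) *
      (SchwartzMap.fourierTransformCLM ℂ f) (p / (2 * π)) := by
  unfold fourierHat
  push_cast
  congr 1
  rw [show ((SchwartzMap.fourierTransformCLM ℂ f) (p / (2 * π))
      = FourierTransform.fourier (⇑f : ℝ → ℂ) (p / (2 * π))) from rfl,
    Real.fourier_real_eq_integral_exp_smul]
  refine MeasureTheory.integral_congr_ae (Filter.Eventually.of_forall fun x => ?_)
  simp only [smul_eq_mul]
  congr 1
  have h : -2 * π * x * (p / (2 * π)) = -(x * p) := by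
    field_simp
  rw [h]
  push_cast
  ring_nf

lemma schwartz_bound (A : SchwartzMap ℝ ℂ) : ∃ C : ℝ, 0 ≤ C ∧ ∀ x, ‖A x‖ ≤ C := by
  refine ⟨SchwartzMap.seminorm ℝ 0 0 A, apply_nonneg _ _, fun x => ?_⟩
  exact SchwartzMap.norm_le_seminorm ℝ A x

lemma schwartz_lip (A : SchwartzMap ℝ ℂ) :
    ∃ L : ℝ, 0 ≤ L ∧ ∀ x y : ℝ, ‖A x - A y‖ ≤ L * |x - y| := by
  obtain ⟨C, hC0, hC⟩ := schwartz_bound (SchwartzMap.derivCLM ℝ ℂ A)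
  refine ⟨C, hC0, fun x y => ?_⟩
  have hlip : LipschitzWith C.toNNReal ⇑A := by
    apply lipschitzWith_of_nnnorm_deriv_le (A.differentiable)
    intro x
    rw [← Real.toNNReal_coe (r := ‖deriv (⇑A) x‖₊)]
    apply Real.toNNReal_mono
    simpa only [coe_nnnorm, ← SchwartzMap.derivCLM_apply ℝ A x] using hC x
  have := hlip.dist_le_mul x y
  rw [dist_eq_norm, dist_eq_norm] at this
  calc ‖A x - A y‖ ≤ C.toNNReal * ‖x - y‖ := this
    _ ≤ C * |x - y| := by
        rw [Real.norm_eq_abs, Real.coe_toNNReal _ hC0]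

open Real in
noncomputable def Fdef (f g : SchwartzMap ℝ ℂ) : ℝ → ℂ :=
  fun p => (starRingEnd ℂ) (fourierHat (⇑f) p) * fourierHat (⇑g) p

open Real in
lemma fourierHat_continuous (f : SchwartzMap ℝ ℂ) : Continuous (fourierHat ⇑f) := by
  have h : fourierHat ⇑f = fun p => (((Real.sqrt (2 * π))⁻¹ : ℝ) : ℂ) *
      (SchwartzMap.fourierTransformCLM ℂ f) (p / (2 * π)) := funext (fourierHat_eq f)
  rw [h]
  exact continuous_const.mul ((SchwartzMap.fourierTransformCLM ℂ f).continuous.comp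
    (continuous_id.div_const _))

lemma Fdef_continuous (f g : SchwartzMap ℝ ℂ) : Continuous (Fdef f g) :=
  (continuous_star.comp (fourierHat_continuous f)).mul (fourierHat_continuous g)

open Real in
lemma Fdef_integrable (f g : SchwartzMap ℝ ℂ) : Integrable (Fdef f g) := by
  have hB : Integrable (fun p : ℝ => (((Real.sqrt (2 * π))⁻¹ : ℝ) : ℂ) *
      (SchwartzMap.fourierTransformCLM ℂ g) (p / (2 * π))) := by
    refine Integrable.const_mul ?_ _
    exact (SchwartzMap.integrable (SchwartzMap.fourierTransformCLM ℂ g)).comp_div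
      (by positivity : (2 * π : ℝ) ≠ 0)
  have hg : Integrable (fourierHat ⇑g) := by
    have h : fourierHat ⇑g = fun p => (((Real.sqrt (2 * π))⁻¹ : ℝ) : ℂ) *
        (SchwartzMap.fourierTransformCLM ℂ g) (p / (2 * π)) := funext (fourierHat_eq g)
    rw [h]; exact hB
  obtain ⟨C, hC0, hC⟩ := schwartz_bound (SchwartzMap.fourierTransformCLM ℂ f)
  refine hg.bdd_mul (c := (Real.sqrt (2 * π))⁻¹ * C) ((continuous_star.comp (fourierHat_continuous f)).aestronglyMeasurable) (Filter.Eventually.of_forall fun p => ?_)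
  rw [RCLike.norm_conj, fourierHat_eq, norm_mul]
  gcongr
  · simp [abs_of_nonneg (Real.sqrt_nonneg _)]
  · exact hC _

open Real in
lemma Fdef_sub_bound (f g : SchwartzMap ℝ ℂ) :
    ∃ L : ℝ, 0 ≤ L ∧ ∀ p : ℝ, ‖Fdef f g p - Fdef f g (-p)‖ ≤ L * |p| := by
  set A := SchwartzMap.fourierTransformCLM ℂ f with hA
  set B := SchwartzMap.fourierTransformCLM ℂ g with hB
  obtain ⟨CA, hCA0, hCA⟩ := schwartz_bound A
  obtain ⟨CB, hCB0, hCB⟩ := schwartz_bound B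
  obtain ⟨LA, hLA0, hLA⟩ := schwartz_lip A
  obtain ⟨LB, hLB0, hLB⟩ := schwartz_lip B
  set c : ℝ := (Real.sqrt (2 * π))⁻¹ with hc
  have hc0 : 0 ≤ c := by positivity
  refine ⟨c ^ 2 * (CA * LB + LA * CB) / π, by positivity, fun p => ?_⟩
  set q : ℝ := p / (2 * π) with hq
  have h1 : Fdef f g p = (c : ℂ) ^ 2 * ((starRingEnd ℂ) (A q) * B q) := by
    unfold Fdef
    rw [fourierHat_eq, fourierHat_eq, map_mul, Complex.conj_ofReal]
    ring
  have h2 : Fdef f g (-p) = (c : ℂ) ^ 2 * ((starRingEnd ℂ) (A (-q)) * B (-q)) := by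
    unfold Fdef
    rw [fourierHat_eq, fourierHat_eq, map_mul, Complex.conj_ofReal, neg_div, ← hq]
    ring
  rw [h1, h2, ← mul_sub, norm_mul]
  have hnc : ‖(c : ℂ) ^ 2‖ = c ^ 2 := by
    rw [norm_pow, Complex.norm_real, Real.norm_eq_abs, abs_of_nonneg hc0]
  rw [hnc]
  have key : ‖(starRingEnd ℂ) (A q) * B q - (starRingEnd ℂ) (A (-q)) * B (-q)‖
      ≤ (CA * LB + LA * CB) * |q - -q| := by
    have hsplit : (starRingEnd ℂ) (A q) * B q - (starRingEnd ℂ) (A (-q)) * B (-q)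
        = (starRingEnd ℂ) (A q) * (B q - B (-q))
          + ((starRingEnd ℂ) (A q) - (starRingEnd ℂ) (A (-q))) * B (-q) := by ring
    rw [hsplit]
    calc _ ≤ ‖(starRingEnd ℂ) (A q) * (B q - B (-q))‖
          + ‖((starRingEnd ℂ) (A q) - (starRingEnd ℂ) (A (-q))) * B (-q)‖ := norm_add_le _ _
      _ ≤ CA * (LB * |q - -q|) + LA * |q - -q| * CB := by
          rw [norm_mul, norm_mul]
          gcongr
          · rw [RCLike.norm_conj]; exact hCA q
          · exact hLB q (-q)
          · rw [← map_sub, RCLike.norm_conj]; exact hLA q (-q)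
          · exact hCB (-q)
      _ = (CA * LB + LA * CB) * |q - -q| := by ring
  have habs : |q - -q| = |p| / π := by
    have : q - -q = p / π := by
      rw [hq]; field_simp; ring
    rw [this, abs_div, abs_of_pos Real.pi_pos]
  calc c ^ 2 * ‖(starRingEnd ℂ) (A q) * B q - (starRingEnd ℂ) (A (-q)) * B (-q)‖
      ≤ c ^ 2 * ((CA * LB + LA * CB) * |q - -q|) := by gcongr
    _ = c ^ 2 * (CA * LB + LA * CB) / π * |p| := by rw [habs]; field_simp

noncomputable def kre (p : ℝ) : ℝ := (1 - Real.exp (-p))⁻¹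

lemma kre_denom_pos {p : ℝ} (hp : 0 < p) : 0 < 1 - Real.exp (-p) := by
  have : Real.exp (-p) < 1 := Real.exp_lt_one_iff.mpr (by linarith)
  linarith

lemma kre_pos {p : ℝ} (hp : 0 < p) : 0 < kre p := inv_pos.2 (kre_denom_pos hp)

lemma kre_add {p : ℝ} (hp : p ≠ 0) : kre p + kre (-p) = 1 := by
  unfold kre
  rw [neg_neg]
  have h1 : 1 - Real.exp (-p) ≠ 0 := by
    intro h
    have : Real.exp (-p) = 1 := by linarith
    have : Real.exp (-p) = Real.exp 0 := by simpa using this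
    have := Real.exp_injective this
    exact hp (by linarith)
  have h2 : 1 - Real.exp p ≠ 0 := by
    intro h
    have : Real.exp p = 1 := by linarith
    have : Real.exp p = Real.exp 0 := by simpa using this
    exact hp (Real.exp_injective this)
  have h3 : Real.exp (-p) * Real.exp p = 1 := by
    rw [← Real.exp_add]; simp
  field_simp
  nlinarith [h3]

lemma kre_le_mono {a p : ℝ} (ha : 0 < a) (hp : a ≤ p) : kre p ≤ kre a := by
  have h1 := kre_denom_pos ha
  apply inv_anti₀ h1
  have : Real.exp (-p) ≤ Real.exp (-a) := Real.exp_le_exp.2 (by linarith)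
  linarith

lemma kre_bound_small {p : ℝ} (h0 : 0 < p) (h1 : p ≤ 1) : |kre p| ≤ Real.exp 1 / p := by
  rw [abs_of_pos (kre_pos h0)]
  have key : Real.exp (-1) * p ≤ 1 - Real.exp (-p) := by
    have e1 : p + 1 ≤ Real.exp p := Real.add_one_le_exp p
    have e2 : Real.exp (-1) ≤ Real.exp (-p) := Real.exp_le_exp.2 (by linarith)
    have e3 : 1 - Real.exp (-p) = Real.exp (-p) * (Real.exp p - 1) := by
      rw [mul_sub, ← Real.exp_add]
      simp
    rw [e3]
    have : Real.exp (-p) * p ≤ Real.exp (-p) * (Real.exp p - 1) := by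
      have := Real.exp_pos (-p)
      nlinarith
    nlinarith
  have hpos : 0 < Real.exp (-1) * p := by positivity
  unfold kre
  rw [div_eq_mul_inv]
  calc (1 - Real.exp (-p))⁻¹ ≤ (Real.exp (-1) * p)⁻¹ := by
        apply inv_anti₀ hpos key
    _ = Real.exp 1 * p⁻¹ := by rw [mul_inv, Real.exp_neg, inv_inv]

lemma kre_bound_away {a p : ℝ} (ha : 0 < a) (hp : a ≤ |p|) :
    |kre p| ≤ 1 + (1 - Real.exp (-a))⁻¹ := by
  have hka : 0 < (1 - Real.exp (-a))⁻¹ := inv_pos.2 (kre_denom_pos ha)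
  rcases abs_cases p with ⟨he, _⟩ | ⟨he, _⟩
  · rw [he] at hp
    have h0 : 0 < p := lt_of_lt_of_le ha hp
    rw [abs_of_pos (kre_pos h0)]
    have := kre_le_mono ha hp
    unfold kre at *
    linarith
  · rw [he] at hp
    have h0 : 0 < -p := lt_of_lt_of_le ha hp
    have hadd := kre_add (p := -p) (by linarith)
    rw [neg_neg] at hadd
    have hkp : kre p = 1 - kre (-p) := by linarith
    have h1 : 0 < kre (-p) := kre_pos h0
    have h2 : kre (-p) ≤ kre a := kre_le_mono ha hp
    rw [hkp, abs_sub_comm]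
    calc |kre (-p) - 1| ≤ |kre (-p)| + |(1:ℝ)| := abs_sub _ _
      _ ≤ 1 + (1 - Real.exp (-a))⁻¹ := by
          rw [abs_of_pos h1, abs_one]
          unfold kre at *
          linarith

theorem pv_twoPoint_exists (f g : SchwartzMap ℝ ℂ) :
    ∃ L : ℂ, Tendsto
      (fun ε : ℝ => ∫ p in {p : ℝ | ε ≤ |p|},
        ((1 - Real.exp (-p) : ℝ) : ℂ)⁻¹ * (starRingEnd ℂ) (fourierHat (⇑f) p)
          * fourierHat (⇑g) p)
      (nhdsWithin (0 : ℝ) (Set.Ioi 0)) (nhds L) := by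
  classical
  set F := Fdef f g with hFdef
  set G : ℝ → ℂ := fun p => ((kre p : ℝ) : ℂ) * F p with hG
  have hinteq : (fun ε : ℝ => ∫ p in {p : ℝ | ε ≤ |p|},
        ((1 - Real.exp (-p) : ℝ) : ℂ)⁻¹ * (starRingEnd ℂ) (fourierHat (⇑f) p)
          * fourierHat (⇑g) p)
      = fun ε : ℝ => ∫ p in {p : ℝ | ε ≤ |p|}, G p := by
    funext ε
    refine setIntegral_congr_fun (by
      have h : {p : ℝ | ε ≤ |p|} = (fun p : ℝ => |p|) ⁻¹' Set.Ici ε := rfl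
      rw [h]
      exact measurableSet_Ici.preimage (measurable_id.norm))
      (fun p _ => ?_)
    simp only [hG, hFdef]
    unfold kre Fdef
    push_cast
    ring
  rw [hinteq]
  obtain ⟨L, hL0, hLip⟩ := Fdef_sub_bound f g
  have hFcont : Continuous F := Fdef_continuous f g
  have hFint : Integrable F := Fdef_integrable f g
  have hFnegint : Integrable (fun p => F (-p)) := hFint.comp_neg
  -- measurability of G
  have hkreMeas : Measurable kre := by
    have : Measurable fun p : ℝ => 1 - Real.exp (-p) :=
      (continuous_const.sub (Real.continuous_exp.comp continuous_neg)).measurable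
    exact this.inv
  have hGmeas : AEStronglyMeasurable G volume := by
    refine (Measurable.stronglyMeasurable ?_).aestronglyMeasurable
    exact (Complex.measurable_ofReal.comp hkreMeas).mul hFcont.measurable
  have hGnegmeas : AEStronglyMeasurable (fun p => G (-p)) volume := by
    refine (Measurable.stronglyMeasurable ?_).aestronglyMeasurable
    exact ((Complex.measurable_ofReal.comp hkreMeas).mul hFcont.measurable).comp measurable_neg
  set H : ℝ → ℂ := fun p => G p + G (-p) with hH
  have hHmeas : AEStronglyMeasurable H volume := hGmeas.add hGnegmeas
  -- rewriting of H away from 0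
  have hHeq : ∀ p : ℝ, p ≠ 0 → H p = ((kre p : ℝ) : ℂ) * (F p - F (-p)) + F (-p) := by
    intro p hp
    have h2 : (kre (-p) : ℝ) = 1 - kre p := by linarith [kre_add hp]
    simp only [hH, hG, h2]
    push_cast
    ring
  -- integrability of H on Ioi 0
  set C1 : ℝ := 1 + (1 - Real.exp (-1))⁻¹ with hC1
  have hC1pos : 0 < C1 := by
    have h := kre_denom_pos (p := 1) one_pos
    have : 0 < (1 - Real.exp (-1))⁻¹ := inv_pos.2 h
    simp only [hC1]; linarith
  have hLip' : ∀ p : ℝ, ‖F p - F (-p)‖ ≤ L * |p| := hLip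
  have hHbound : ∀ p ∈ Set.Ioi (0:ℝ), ‖H p‖ ≤
      (Set.Ioc (0:ℝ) 1).indicator (fun _ => Real.exp 1 * L) p
        + (C1 + 1) * (‖F p‖ + ‖F (-p)‖) := by
    intro p hp
    have hp0 : (0:ℝ) < p := hp
    rw [hHeq p (ne_of_gt hp0)]
    refine (norm_add_le _ _).trans ?_
    rw [norm_mul, Complex.norm_real, Real.norm_eq_abs]
    rcases le_or_gt p 1 with hple | hpgt
    · have hk := kre_bound_small hp0 hple
      have hk' : |kre p| * p ≤ Real.exp 1 := (le_div_iff₀ hp0).mp hk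
      have h2 : ‖F p - F (-p)‖ ≤ L * p := by
        simpa [abs_of_pos hp0] using hLip' p
      have h1 : |kre p| * ‖F p - F (-p)‖ ≤ Real.exp 1 * L := by
        calc |kre p| * ‖F p - F (-p)‖ ≤ |kre p| * (L * p) :=
              mul_le_mul_of_nonneg_left h2 (abs_nonneg _)
          _ = (|kre p| * p) * L := by ring
          _ ≤ Real.exp 1 * L := mul_le_mul_of_nonneg_right hk' hL0
      rw [Set.indicator_of_mem (Set.mem_Ioc.2 ⟨hp0, hple⟩)]
      have : ‖F (-p)‖ ≤ (C1 + 1) * (‖F p‖ + ‖F (-p)‖) := by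
        nlinarith [norm_nonneg (F p), norm_nonneg (F (-p))]
      linarith
    · have hk1 : |kre p| ≤ C1 := by
        simpa [hC1] using kre_bound_away one_pos (p := p) (by rw [abs_of_pos hp0]; linarith)
      rw [Set.indicator_of_notMem (fun hmem => absurd (Set.mem_Ioc.1 hmem).2 (not_le.2 hpgt))]
      have h2 : ‖F p - F (-p)‖ ≤ ‖F p‖ + ‖F (-p)‖ := norm_sub_le _ _
      have h1 : |kre p| * ‖F p - F (-p)‖ ≤ C1 * (‖F p‖ + ‖F (-p)‖) := by
        have h0 : (0:ℝ) ≤ |kre p| := abs_nonneg _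
        nlinarith [norm_nonneg (F p), norm_nonneg (F (-p))]
      nlinarith [norm_nonneg (F p), norm_nonneg (F (-p))]
  have hMint : Integrable (fun p : ℝ => (Set.Ioc (0:ℝ) 1).indicator
      (fun _ => Real.exp 1 * L) p + (C1 + 1) * (‖F p‖ + ‖F (-p)‖)) := by
    refine Integrable.add ?_ ?_
    · rw [integrable_indicator_iff measurableSet_Ioc]
      exact integrableOn_const measure_Ioc_lt_top.ne
    · exact (hFint.norm.add hFnegint.norm).const_mul _
  have hHint : IntegrableOn H (Set.Ioi (0:ℝ)) := by
    refine Integrable.mono' hMint.integrableOn (hHmeas.restrict) ?_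
    rw [ae_restrict_iff' measurableSet_Ioi]
    exact Filter.Eventually.of_forall hHbound
  -- Step A: reduce to an integral over (ε, ∞)
  have hstepA : ∀ ε : ℝ, 0 < ε →
      (∫ p in {p : ℝ | ε ≤ |p|}, G p) = ∫ p in Set.Ioi ε, H p := by
    intro ε hε
    have hCε : ∀ p : ℝ, ε ≤ |p| → ‖G p‖ ≤ (1 + (1 - Real.exp (-ε))⁻¹) * ‖F p‖ := by
      intro p hp
      simp only [hG]
      rw [norm_mul, Complex.norm_real, Real.norm_eq_abs]
      exact mul_le_mul_of_nonneg_right (kre_bound_away hε hp) (norm_nonneg _)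
    have hGon : ∀ s : Set ℝ, MeasurableSet s → (∀ p ∈ s, ε ≤ |p|) → IntegrableOn G s := by
      intro s hs hsub
      refine Integrable.mono' ((hFint.norm.const_mul (1 + (1 - Real.exp (-ε))⁻¹)).integrableOn)
        (hGmeas.restrict) ?_
      rw [ae_restrict_iff' hs]
      exact Filter.Eventually.of_forall (fun p hp => hCε p (hsub p hp))
    have hsetEq : {p : ℝ | ε ≤ |p|} = Set.Iic (-ε) ∪ Set.Ici ε := by
      ext p
      simp only [Set.mem_setOf_eq, Set.mem_union, Set.mem_Iic, Set.mem_Ici, le_abs, le_neg]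
      tauto
    have hIic : IntegrableOn G (Set.Iic (-ε)) := hGon _ measurableSet_Iic (fun p hp => by
      rw [Set.mem_Iic] at hp
      rw [abs_of_neg (by linarith : p < 0)]; linarith)
    have hIci : IntegrableOn G (Set.Ici ε) := hGon _ measurableSet_Ici (fun p hp => by
      rw [Set.mem_Ici] at hp
      rw [abs_of_pos (by linarith : 0 < p)]; linarith)
    have hdisj : Disjoint (Set.Iic (-ε)) (Set.Ici ε) :=
      Set.Iic_disjoint_Ici.2 (by intro h; linarith)
    rw [hsetEq, setIntegral_union hdisj measurableSet_Ici hIic hIci]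
    have h1 : (∫ p in Set.Iic (-ε), G p) = ∫ p in Set.Ioi ε, G (-p) :=
      (integral_comp_neg_Ioi ε G).symm
    have h2 : (∫ p in Set.Ici ε, G p) = ∫ p in Set.Ioi ε, G p :=
      MeasureTheory.integral_Ici_eq_integral_Ioi
    have hint1 : IntegrableOn (fun p => G (-p)) (Set.Ioi ε) := by
      refine Integrable.mono'
        ((hFnegint.norm.const_mul (1 + (1 - Real.exp (-ε))⁻¹)).integrableOn)
        (hGnegmeas.restrict) ?_
      rw [ae_restrict_iff' measurableSet_Ioi]
      refine Filter.Eventually.of_forall (fun p hp => ?_)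
      have hp' : ε < p := hp
      have habs : ε ≤ |-p| := by
        rw [abs_neg, abs_of_pos (lt_trans hε hp')]; exact le_of_lt hp'
      exact hCε (-p) habs
    have hint2 : IntegrableOn G (Set.Ioi ε) := hIci.mono_set Set.Ioi_subset_Ici_self
    rw [h1, h2, ← integral_add hint1 hint2]
    refine setIntegral_congr_fun measurableSet_Ioi (fun p hp => ?_)
    simp only [hH]
    ring
  -- Step C: the limit exists
  refine ⟨∫ p in Set.Ioi (0:ℝ), H p, ?_⟩
  have hlim : Tendsto (fun ε : ℝ => ∫ p in Set.Ioi ε, H p)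
      (nhdsWithin 0 (Set.Ioi 0)) (nhds (∫ p in Set.Ioi (0:ℝ), H p)) := by
    have hrw : ∀ ε : ℝ, (∫ p in Set.Ioi ε, H p) = ∫ p, (Set.Ioi ε).indicator H p :=
      fun ε => (integral_indicator measurableSet_Ioi).symm
    simp only [hrw]
    refine tendsto_integral_filter_of_dominated_convergence
      ((Set.Ioi (0:ℝ)).indicator (fun q => ‖H q‖)) ?_ ?_ ?_ ?_
    · exact Filter.Eventually.of_forall (fun ε => hHmeas.indicator measurableSet_Ioi)
    · refine eventually_nhdsWithin_of_forall (fun ε hε => ?_)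
      have hε0 : (0:ℝ) < ε := hε
      refine Filter.Eventually.of_forall (fun p => ?_)
      by_cases hp : p ∈ Set.Ioi ε
      · rw [Set.indicator_of_mem hp]
        have hp0 : p ∈ Set.Ioi (0:ℝ) := Set.mem_Ioi.2 (lt_trans hε0 hp)
        rw [Set.indicator_of_mem hp0]
      · rw [Set.indicator_of_notMem hp, norm_zero]
        exact Set.indicator_apply_nonneg (fun _ => norm_nonneg _)
    · rw [integrable_indicator_iff measurableSet_Ioi]
      exact hHint.norm
    · have h0 : ∀ᵐ p : ℝ, p ≠ 0 := by
        have hz : volume ({0} : Set ℝ) = 0 := measure_singleton 0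
        exact compl_mem_ae_iff.2 hz
      filter_upwards [h0] with p hp
      rcases lt_or_gt_of_ne hp with hneg | hpos
      · have hev : ∀ᶠ ε in nhdsWithin (0:ℝ) (Set.Ioi 0),
            (Set.Ioi (0:ℝ)).indicator H p = (Set.Ioi ε).indicator H p := by
          refine eventually_nhdsWithin_of_forall (fun ε hε => ?_)
          have hε0 : (0:ℝ) < ε := hε
          rw [Set.indicator_of_notMem (by simp only [Set.mem_Ioi]; intro h; linarith),
            Set.indicator_of_notMem (by simp only [Set.mem_Ioi]; intro h; linarith)]
        exact Tendsto.congr' hev tendsto_const_nhds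
      · have hmem : Set.Ioo (0:ℝ) p ∈ nhdsWithin (0:ℝ) (Set.Ioi 0) :=
          Ioo_mem_nhdsGT_of_mem ⟨le_refl 0, hpos⟩
        have hev : ∀ᶠ ε in nhdsWithin (0:ℝ) (Set.Ioi 0),
            (Set.Ioi (0:ℝ)).indicator H p = (Set.Ioi ε).indicator H p := by
          filter_upwards [hmem] with ε hε
          rw [Set.indicator_of_mem (Set.mem_Ioi.2 hε.2), Set.indicator_of_mem (Set.mem_Ioi.2 hpos)]
        exact Tendsto.congr' hev tendsto_const_nhds
  have heq : (fun ε : ℝ => ∫ p in Set.Ioi ε, H p)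
      =ᶠ[nhdsWithin (0:ℝ) (Set.Ioi 0)] (fun ε : ℝ => ∫ p in {p : ℝ | ε ≤ |p|}, G p) := by
    filter_upwards [self_mem_nhdsWithin] with ε hε
    exact (hstepA ε hε).symm
  exact Tendsto.congr' heq hlim
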